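/- Every quantum graph G has a code of dimension at least ⌈|G| / (‖G‖+1)²⌉, where |G| = dim V(G) and ‖G‖ = dim E(G) − 1. -/

import Mathlib

open Matrix

structure QuantumGraph (n : ℕ) where
  E : Submodule ℝ (Matrix (Fin n) (Fin n) ℂ)
  herm : ∀ A ∈ E, A.IsHermitian
  one_mem : (1 : Matrix (Fin n) (Fin n) ℂ) ∈ E

def IsCodeProj {n : ℕ} (G : QuantumGraph n) (P : Matrix (Fin n) (Fin n) ℂ)
    (ε : Matrix (Fin n) (Fin n) ℂ → ℝ) : Prop :=
  P.IsHermitian ∧ P * P = P ∧ ∀ A ∈ G.E, P * A * P = (ε A : ℂ) • P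

open Module Metric Finset


variable {V : Type} [NormedAddCommGroup V] [InnerProductSpace ℝ V] [FiniteDimensional ℝ V]

local notation "⟪" x ", " y "⟫" => inner (𝕜 := ℝ) x y

set_option maxHeartbeats 1000000 in
theorem colorful_caratheodory {N : ℕ} (hN : Module.finrank ℝ V = N)
    (C : Fin (N+1) → Finset V) (hC : ∀ i, (0:V) ∈ convexHull ℝ (C i : Set V)) :
    ∃ x : Fin (N+1) → V, (∀ i, x i ∈ C i) ∧ (0:V) ∈ convexHull ℝ (Set.range x) := by
  classical
  have hCne : ∀ i, (C i).Nonempty := by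
    intro i
    have h2 : ((C i : Set V)).Nonempty := (convexHull_nonempty_iff (𝕜 := ℝ)).1 ⟨0, hC i⟩
    exact Finset.coe_nonempty.1 h2
  set F : Finset (Fin (N+1) → V) := Fintype.piFinset C with hF
  have hFne : F.Nonempty := by
    obtain ⟨g, hg⟩ := Classical.axiomOfChoice hCne
    exact ⟨g, by simp [hF, Fintype.mem_piFinset]; intro i; exact hg i⟩
  set D : (Fin (N+1) → V) → ℝ := fun x => infDist 0 (convexHull ℝ (Set.range x)) with hD
  obtain ⟨x₀, hx₀F, hx₀min⟩ := F.exists_min_image D hFne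
  have hx₀ : ∀ i, x₀ i ∈ C i := by
    intro i; exact (Fintype.mem_piFinset.1 hx₀F) i
  set K : Set V := convexHull ℝ (Set.range x₀) with hK
  have hKcomp : IsCompact K := (Set.finite_range x₀).isCompact_convexHull ℝ
  have hKne : K.Nonempty := (convexHull_nonempty_iff (𝕜 := ℝ)).2 (Set.range_nonempty _)
  obtain ⟨z, hzK, hzdist⟩ := hKcomp.exists_infDist_eq_dist hKne 0
  by_cases hz0 : z = 0
  · exact ⟨x₀, hx₀, hz0 ▸ hzK⟩
  -- variational inequality
  have key : ∀ w ∈ K, ‖z‖^2 ≤ ⟪z, w⟫ := by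
    have h1 : ‖(0:V) - z‖ = ⨅ w : K, ‖(0:V) - w‖ := by
      have := hzdist
      rw [infDist_eq_iInf] at this
      rw [← dist_eq_norm, ← this]
      congr 1; funext w; rw [dist_eq_norm]
    have h2 := (norm_eq_iInf_iff_real_inner_le_zero (convex_convexHull ℝ _) hzK).1 h1
    intro w hw
    have := h2 w hw
    have hzz : ⟪z, z⟫ = ‖z‖^2 := real_inner_self_eq_norm_sq z
    have hexp : ⟪(0:V) - z, w - z⟫ = -⟪z, w⟫ + ⟪z, z⟫ := by
      rw [zero_sub, inner_neg_left, inner_sub_right]; ring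
    rw [hexp, hzz] at this; linarith
  have hzpos : 0 < ‖z‖^2 := pow_pos (norm_pos_iff.2 hz0) 2
  -- z lies in the convex hull of the finset of selected points
  set S₀ : Finset V := Finset.univ.image x₀ with hS₀
  have hS₀coe : (S₀ : Set V) = Set.range x₀ := by simp [hS₀]
  have hzS₀ : z ∈ convexHull ℝ (S₀ : Set V) := by rw [hS₀coe]; exact hzK
  rw [Finset.convexHull_eq] at hzS₀
  obtain ⟨w, hw0, hw1, hwz⟩ := hzS₀
  have hzsum : ∑ y ∈ S₀, w y • y = z := by
    rw [← hwz, Finset.centerMass, hw1]; simp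
  have hinner : ∑ y ∈ S₀, w y * ⟪z, y⟫ = ‖z‖^2 := by
    rw [← real_inner_self_eq_norm_sq, ← hzsum, inner_sum]
    simp [real_inner_smul_right]
  have hterms : ∀ y ∈ S₀, w y * (⟪z, y⟫ - ‖z‖^2) = 0 := by
    have hsum0 : ∑ y ∈ S₀, w y * (⟪z, y⟫ - ‖z‖^2) = 0 := by
      simp only [mul_sub]
      rw [Finset.sum_sub_distrib, ← Finset.sum_mul, hw1, hinner]; ring
    intro y hy
    refine (Finset.sum_eq_zero_iff_of_nonneg ?_).1 hsum0 y hy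
    intro y hy
    have hyK : y ∈ K := subset_convexHull ℝ _ (hS₀coe ▸ Finset.mem_coe.2 hy)
    have := key y hyK
    have := hw0 y hy
    nlinarith
  set T' := S₀.filter (fun y => ⟪z, y⟫ = ‖z‖^2) with hT'
  have hwzero : ∀ y ∈ S₀, y ∉ T' → w y = 0 := by
    intro y hy hyT
    by_contra hwy
    have h1 := hterms y hy
    rcases mul_eq_zero.1 h1 with h|h
    · exact hwy h
    · exact hyT (Finset.mem_filter.2 ⟨hy, by linarith⟩)
  have hw1' : ∑ y ∈ T', w y = 1 := by
    rw [← hw1]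
    exact Finset.sum_subset (Finset.filter_subset _ _) (fun y hy hyn => hwzero y hy hyn)
  have hzsum' : ∑ y ∈ T', w y • y = z := by
    rw [← hzsum]
    exact Finset.sum_subset (Finset.filter_subset _ _)
      (fun y hy hyn => by rw [hwzero y hy hyn, zero_smul])
  have hzT' : z ∈ convexHull ℝ (T' : Set V) := by
    have hcm := Finset.centerMass_mem_convexHull T'
      (fun y hy => hw0 y (Finset.mem_filter.1 hy).1) (by rw [hw1']; norm_num)
      (fun y hy => Finset.mem_coe.2 hy)
    rw [Finset.centerMass, hw1', inv_one, one_smul] at hcm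
    rwa [hzsum'] at hcm
  rw [convexHull_eq_union] at hzT'
  simp only [Set.mem_iUnion, exists_prop] at hzT'
  obtain ⟨t, hts, hai, hzt⟩ := hzT'
  have htne : t.Nonempty := by
    rcases Finset.eq_empty_or_nonempty t with h|h
    · rw [h] at hzt; simp at hzt
    · exact h
  have hNpos : 1 ≤ N := by
    have : Nontrivial V := ⟨z, 0, hz0⟩
    have := Module.finrank_pos (R := ℝ) (M := V)
    omega
  have hcard : t.card ≤ N := by
    set f : V →ₗ[ℝ] ℝ :=
      { toFun := fun y => ⟪z, y⟫
        map_add' := fun a b => inner_add_right z a b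
        map_smul' := fun r a => real_inner_smul_right z a r } with hf
    have hfz : f z ≠ 0 := by
      simp only [hf, LinearMap.coe_mk, AddHom.coe_mk]
      rw [real_inner_self_eq_norm_sq]; exact ne_of_gt hzpos
    have hsurj : Function.Surjective f := by
      intro r
      refine ⟨(r / f z) • z, ?_⟩
      rw [_root_.map_smul, smul_eq_mul]; field_simp
    have hker : Module.finrank ℝ (LinearMap.ker f) = N - 1 := by
      have hrn := f.finrank_range_add_finrank_ker
      rw [LinearMap.range_eq_top.2 hsurj, finrank_top, hN] at hrn
      have : Module.finrank ℝ ℝ = 1 := Module.finrank_self ℝ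
      omega
    have hspan : vectorSpan ℝ (t : Set V) ≤ LinearMap.ker f := by
      rw [vectorSpan, Submodule.span_le]
      rintro v ⟨p, hp, q, hq, rfl⟩
      have hpT : ⟪z, p⟫ = ‖z‖^2 := (Finset.mem_filter.1 (hts hp)).2
      have hqT : ⟪z, q⟫ = ‖z‖^2 := (Finset.mem_filter.1 (hts hq)).2
      simp only [SetLike.mem_coe, LinearMap.mem_ker]
      show f (p - q) = 0
      rw [_root_.map_sub]
      show ⟪z, p⟫ - ⟪z, q⟫ = 0
      rw [hpT, hqT]; ring
    have hc : Fintype.card { x // x ∈ t } = (t.card - 1) + 1 := by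
      rw [Fintype.card_coe]
      have := htne.card_pos
      omega
    have hr : Set.range (Subtype.val : {x // x ∈ t} → V) = (t : Set V) :=
      Subtype.range_coe
    have h1 := hai.finrank_vectorSpan hc
    have h2 : Module.finrank ℝ (vectorSpan ℝ
        (Set.range (Subtype.val : {x // x ∈ t} → V))) ≤
        Module.finrank ℝ (LinearMap.ker f) :=
      Submodule.finrank_mono (by rw [hr]; exact hspan)
    have := htne.card_pos
    omega
  -- choose a free index i₀
  have hcover : ∀ p ∈ t, ∃ i, x₀ i = p := by
    intro p hp
    have : p ∈ S₀ := (Finset.mem_filter.1 (hts hp)).1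
    obtain ⟨i, _, hi⟩ := Finset.mem_image.1 this
    exact ⟨i, hi⟩
  choose g hg using fun (p : {y // y ∈ t}) => hcover p.1 p.2
  have ginj : Function.Injective g := fun p q hpq =>
    Subtype.ext (by rw [← hg p, ← hg q, hpq])
  set I : Finset (Fin (N+1)) := Finset.univ.image g with hI
  have hIcard : I.card ≤ N := by
    rw [hI, Finset.card_image_of_injective _ ginj, Finset.card_univ, Fintype.card_coe]
    exact hcard
  obtain ⟨i₀, hi₀⟩ : ∃ i₀, i₀ ∉ I := by
    by_contra h; push_neg at h
    have : I = Finset.univ := Finset.eq_univ_iff_forall.2 h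
    rw [this, Finset.card_univ, Fintype.card_fin] at hIcard; omega
  -- choose a replacement point
  obtain ⟨x', hx'C, hx'z⟩ : ∃ x' ∈ C i₀, ⟪z, x'⟫ ≤ 0 := by
    by_contra h; push_neg at h
    have h0 := hC i₀
    rw [Finset.convexHull_eq] at h0
    obtain ⟨w', hw'0, hw'1, hw'z⟩ := h0
    have hsum : ∑ y ∈ C i₀, w' y • y = 0 := by
      rw [← hw'z, Finset.centerMass, hw'1]; simp
    have hzero : ∑ y ∈ C i₀, w' y * ⟪z, y⟫ = 0 := by
      have : ⟪z, (0:V)⟫ = 0 := inner_zero_right z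
      rw [← this, ← hsum, inner_sum]
      simp [real_inner_smul_right]
    have hpos : 0 < ∑ y ∈ C i₀, w' y * ⟪z, y⟫ := by
      apply Finset.sum_pos'
      · intro y hy; exact mul_nonneg (hw'0 y hy) (le_of_lt (h y hy))
      · obtain ⟨y, hy, hwy⟩ : ∃ y ∈ C i₀, 0 < w' y := by
          by_contra hally; push_neg at hally
          have : ∑ y ∈ C i₀, w' y ≤ 0 :=
            Finset.sum_nonpos (fun y hy => hally y hy)
          linarith
        exact ⟨y, hy, mul_pos hwy (h y hy)⟩
    linarith
  set y₀ := Function.update x₀ i₀ x' with hy₀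
  have hy₀F : y₀ ∈ F := by
    rw [hF]
    refine Fintype.mem_piFinset.2 (fun i => ?_)
    by_cases h : i = i₀
    · subst h; rw [hy₀, Function.update_self]; exact hx'C
    · rw [hy₀, Function.update_of_ne h]; exact hx₀ i
  have htrange : (t : Set V) ⊆ Set.range y₀ := by
    intro p hp
    have hgi : g ⟨p, hp⟩ ≠ i₀ := by
      intro h; apply hi₀; rw [← h, hI]
      exact Finset.mem_image_of_mem g (Finset.mem_univ _)
    exact ⟨g ⟨p, hp⟩, by rw [hy₀, Function.update_of_ne hgi]; exact hg ⟨p, hp⟩⟩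
  have hzK' : z ∈ convexHull ℝ (Set.range y₀) := convexHull_mono htrange hzt
  have hx'K' : x' ∈ convexHull ℝ (Set.range y₀) :=
    subset_convexHull ℝ _ ⟨i₀, Function.update_self _ _ _⟩
  have hc0 : (0:ℝ) ≤ ‖x' - z‖^2 := sq_nonneg _
  set s : ℝ := ‖z‖^2 / (‖z‖^2 + ‖x' - z‖^2) with hs
  have hs0 : 0 < s := div_pos hzpos (by linarith)
  have hs1 : s ≤ 1 := by rw [div_le_one (by linarith)]; linarith
  have hzs : (1 - s) • z + s • x' ∈ convexHull ℝ (Set.range y₀) :=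
    (convex_convexHull ℝ _) hzK' hx'K' (by linarith) (le_of_lt hs0) (by ring)
  have hnorm : ‖(1 - s) • z + s • x'‖^2 < ‖z‖^2 := by
    have hrw : (1 - s) • z + s • x' = z + s • (x' - z) := by
      rw [smul_sub, sub_smul, one_smul]; abel
    rw [hrw, norm_add_sq_real]
    have h1 : ⟪z, s • (x' - z)⟫ = s * (⟪z, x'⟫ - ‖z‖^2) := by
      rw [real_inner_smul_right, inner_sub_right, real_inner_self_eq_norm_sq]
    have h2 : ‖s • (x' - z)‖^2 = s^2 * ‖x' - z‖^2 := by
      rw [norm_smul, mul_pow, Real.norm_eq_abs, sq_abs]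
    rw [h1, h2]
    have hsc : s * ‖x' - z‖^2 ≤ ‖z‖^2 := by
      rw [hs, div_mul_eq_mul_div, div_le_iff₀ (by linarith)]
      nlinarith
    nlinarith
  have hlt : D y₀ < D x₀ := by
    have h1 : D y₀ ≤ ‖(1 - s) • z + s • x'‖ := by
      have := infDist_le_dist_of_mem (x := (0:V)) hzs
      rwa [dist_zero_left] at this
    have h2 : ‖(1 - s) • z + s • x'‖ < ‖z‖ := by
      nlinarith [norm_nonneg ((1 - s) • z + s • x'), norm_nonneg z]
    have h3 : D x₀ = ‖z‖ := by
      rw [hD]; simp only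
      rw [show (convexHull ℝ) (Set.range x₀) = K from rfl, hzdist, dist_zero_left]
    linarith
  exact absurd (hx₀min y₀ hy₀F) (not_le.2 hlt)

set_option maxHeartbeats 1000000 in
/-- Tverberg's theorem via Sarkaria's tensor trick, for points lifted to level set
`ℓ = 1` of a linear functional on `ℝ^d`. -/
theorem tverberg_lifted {d r : ℕ} (hr : 0 < r)
    (ℓ : (Fin d → ℝ) →ₗ[ℝ] ℝ) (q : Fin (d*(r-1)+1) → (Fin d → ℝ))
    (hq : ∀ i, ℓ (q i) = 1) :
    ∃ (f : Fin (d*(r-1)+1) → Fin r) (w : Fin (d*(r-1)+1) → ℝ) (b : Fin d → ℝ),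
      (∀ i, 0 ≤ w i) ∧
      (∀ j : Fin r, ∑ i ∈ Finset.univ.filter (fun i => f i = j), w i = 1) ∧
      (∀ j : Fin r, ∀ k : Fin d,
        ∑ i ∈ Finset.univ.filter (fun i => f i = j), w i * q i k = b k) := by
  classical
  set E2 := EuclideanSpace ℝ (Fin d × Fin (r-1)) with hE2
  set φ : (Fin d × Fin (r-1) → ℝ) ≃L[ℝ] E2 := (EuclideanSpace.equiv (Fin d × Fin (r-1)) ℝ).symm with hφ
  have hrr : r - 1 < r := by omega
  set jlast : Fin r := ⟨r-1, hrr⟩ with hjlast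
  set u : Fin r → Fin (r-1) → ℝ :=
    fun j l => if j = jlast then -1 else if (j:ℕ) = (l:ℕ) then 1 else 0 with hu
  have husum : ∀ l : Fin (r-1), ∑ j : Fin r, u j l = 0 := by
    intro l
    have hl : (l : ℕ) < r - 1 := l.isLt
    set j₁ : Fin r := ⟨(l:ℕ), by omega⟩ with hj₁
    have hsplit : ∀ j : Fin r, u j l =
        (if j = jlast then (-1:ℝ) else 0) + (if j = j₁ then 1 else 0) := by
      intro j
      by_cases h2 : j = jlast
      · subst h2
        have hne : ¬ (jlast = j₁) := by
          simp only [hj₁, hjlast, Fin.ext_iff]; omega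
        simp [hu, hne]
      · by_cases h1 : j = j₁
        · subst h1; simp [hu, h2]; simp [hj₁]
        · have : ¬ ((j:ℕ) = (l:ℕ)) := by
            intro h; exact h1 (by simp [hj₁, Fin.ext_iff, h])
          simp [hu, h2, h1, this]
    rw [Finset.sum_congr rfl (fun j _ => hsplit j), Finset.sum_add_distrib,
      Finset.sum_ite_eq' Finset.univ jlast (fun _ => (-1:ℝ)),
      Finset.sum_ite_eq' Finset.univ j₁ (fun _ => (1:ℝ))]
    simp
  have keyu : ∀ (B : Fin r → ℝ), (∀ l : Fin (r-1), ∑ j : Fin r, B j * u j l = 0) →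
      ∀ j, B j = B jlast := by
    intro B hB j
    by_cases hj : j = jlast
    · rw [hj]
    · have hjlt : (j : ℕ) < r - 1 := by
        have := j.isLt
        by_contra h
        exact hj (by simp [hjlast, Fin.ext_iff]; omega)
      set l : Fin (r-1) := ⟨(j:ℕ), hjlt⟩ with hl
      have hsplit : ∀ j' : Fin r, B j' * u j' l =
          (if j' = jlast then -B jlast else 0) + (if j' = j then B j else 0) := by
        intro j'
        by_cases h2 : j' = jlast
        · subst h2
          have hne : ¬ (jlast = j) := fun h => hj h.symm
          simp [hu, hne]
        · by_cases h1 : j' = j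
          · subst h1
            have hll : ((j':ℕ) = (l:ℕ)) := rfl
            simp only [hu, if_neg h2, if_pos hll]
            simp
          · have hnl : ¬ ((j':ℕ) = (l:ℕ)) := by
              intro h; exact h1 (by simp only [hl] at h; exact Fin.ext h)
            simp [hu, h2, h1, hnl]
      have := hB l
      rw [Finset.sum_congr rfl (fun j' _ => hsplit j'), Finset.sum_add_distrib,
        Finset.sum_ite_eq' Finset.univ jlast (fun _ => -B jlast),
        Finset.sum_ite_eq' Finset.univ j (fun _ => B j)] at this
      simp at this
      linarith
  -- the colored point sets
  set vij : Fin (d*(r-1)+1) → Fin r → E2 :=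
    fun i j => φ (fun p => q i p.1 * u j p.2) with hvij
  set C : Fin (d*(r-1)+1) → Finset E2 :=
    fun i => Finset.univ.image (vij i) with hC
  have hCmem : ∀ i, (0:E2) ∈ convexHull ℝ (C i : Set E2) := by
    intro i
    have hsum : ∑ j : Fin r, vij i j = 0 := by
      have : ∑ j : Fin r, vij i j = φ (∑ j : Fin r, (fun p => q i p.1 * u j p.2)) := by
        rw [_root_.map_sum]
      rw [this]
      have hz : (∑ j : Fin r, (fun p : Fin d × Fin (r-1) => q i p.1 * u j p.2)) = 0 := by
        funext p
        rw [Finset.sum_apply]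
        have : ∑ j : Fin r, q i p.1 * u j p.2 = q i p.1 * ∑ j : Fin r, u j p.2 := by
          rw [Finset.mul_sum]
        rw [this, husum, mul_zero]
        rfl
      rw [hz, _root_.map_zero]
    have hcm := Finset.centerMass_mem_convexHull (s := (C i : Set E2))
      (z := vij i) (w := fun _ => (1:ℝ)) (Finset.univ : Finset (Fin r))
      (fun _ _ => zero_le_one) (by simp; positivity)
      (fun j _ => Finset.mem_coe.2 (Finset.mem_image_of_mem _ (Finset.mem_univ j)))
    have hcm0 : Finset.univ.centerMass (fun _ : Fin r => (1:ℝ)) (vij i) = 0 := by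
      rw [Finset.centerMass]
      simp only [one_smul]
      rw [hsum, smul_zero]
    rwa [hcm0] at hcm
  -- apply colorful Caratheodory
  have hN : Module.finrank ℝ E2 = d * (r-1) := by
    show Module.finrank ℝ (EuclideanSpace ℝ (Fin d × Fin (r-1))) = d * (r-1)
    rw [finrank_euclideanSpace]
    simp
  obtain ⟨x, hxC, hxhull⟩ := colorful_caratheodory hN C hCmem
  choose f hf using fun i => Finset.mem_image.1 (hxC i)
  have hfx : ∀ i, vij i (f i) = x i := fun i => (hf i).2
  -- extract convex combination indexed by Fin (d*(r-1)+1)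
  rw [mem_convexHull_iff_exists_fintype] at hxhull
  obtain ⟨ι, hι, wt, zpt, hwt0, hwt1, hzpt, hzsum⟩ := hxhull
  choose gi hgi using fun a => hzpt a
  set t : Fin (d*(r-1)+1) → ℝ :=
    fun i => ∑ a ∈ Finset.univ.filter (fun a => gi a = i), wt a with ht
  have ht0 : ∀ i, 0 ≤ t i := fun i => Finset.sum_nonneg (fun a _ => hwt0 a)
  have ht1 : ∑ i, t i = 1 := by
    rw [ht]; rw [Finset.sum_fiberwise Finset.univ gi wt]; exact hwt1
  have htsum : ∑ i, t i • x i = 0 := by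
    have : ∑ i, t i • x i = ∑ i, ∑ a ∈ Finset.univ.filter (fun a => gi a = i), wt a • x i := by
      refine Finset.sum_congr rfl (fun i _ => ?_)
      rw [ht, Finset.sum_smul]
    rw [this]
    have : ∀ i, ∀ a ∈ Finset.univ.filter (fun a => gi a = i), wt a • x i = wt a • zpt a := by
      intro i a ha
      have : gi a = i := (Finset.mem_filter.1 ha).2
      rw [← this, hgi a]
    rw [Finset.sum_congr rfl (fun i _ => Finset.sum_congr rfl (this i))]
    rw [Finset.sum_fiberwise Finset.univ gi (fun a => wt a • zpt a)]
    exact hzsum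
  -- coordinates
  have hcoord : ∀ p : Fin d × Fin (r-1), ∑ i, t i * (q i p.1 * u (f i) p.2) = 0 := by
    intro p
    have h1 : φ.symm (∑ i, t i • x i) = ∑ i, t i • φ.symm (x i) := by
      rw [_root_.map_sum]
      exact Finset.sum_congr rfl (fun i _ => by rw [_root_.map_smul])
    have h2 : ∀ i, φ.symm (x i) = (fun p => q i p.1 * u (f i) p.2) := by
      intro i
      rw [← hfx i, hvij]
      simp only [hφ]
      simp
    rw [htsum, _root_.map_zero] at h1
    have h3 := congrFun h1.symm p
    rw [Finset.sum_apply] at h3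
    simp only [Pi.smul_apply, smul_eq_mul] at h3
    rw [Finset.sum_congr rfl (fun i _ => by rw [h2 i]) ] at h3
    simpa using h3
  -- regroup by fibers of f
  set B : Fin r → Fin d → ℝ :=
    fun j k => ∑ i ∈ Finset.univ.filter (fun i => f i = j), t i * q i k with hB
  have hBu : ∀ k : Fin d, ∀ l : Fin (r-1), ∑ j : Fin r, B j k * u j l = 0 := by
    intro k l
    have h1 : ∀ j : Fin r, B j k * u j l
        = ∑ i ∈ Finset.univ.filter (fun i => f i = j), t i * (q i k * u (f i) l) := by
      intro j
      rw [hB]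
      rw [Finset.sum_mul]
      refine Finset.sum_congr rfl (fun i hi => ?_)
      rw [(Finset.mem_filter.1 hi).2]; ring
    rw [Finset.sum_congr rfl (fun j _ => h1 j),
      Finset.sum_fiberwise Finset.univ f (fun i => t i * (q i k * u (f i) l))]
    exact hcoord (k, l)
  have hBeq : ∀ j : Fin r, ∀ k : Fin d, B j k = B jlast k := by
    intro j k
    exact keyu (fun j => B j k) (fun l => hBu k l) j
  -- apply ℓ
  set T : Fin r → ℝ := fun j => ∑ i ∈ Finset.univ.filter (fun i => f i = j), t i with hT
  have hℓB : ∀ j, ℓ (B j) = T j := by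
    intro j
    have : B j = ∑ i ∈ Finset.univ.filter (fun i => f i = j), t i • q i := by
      funext k
      rw [hB, Finset.sum_apply]
      exact Finset.sum_congr rfl (fun i _ => by simp)
    rw [this, _root_.map_sum, hT]
    refine Finset.sum_congr rfl (fun i _ => ?_)
    rw [_root_.map_smul, hq i]; simp
  have hTeq : ∀ j, T j = T jlast := by
    intro j
    rw [← hℓB, ← hℓB]
    congr 1
    funext k
    exact hBeq j k
  have hTsum : ∑ j : Fin r, T j = 1 := by
    rw [hT, Finset.sum_fiberwise Finset.univ f t]; exact ht1
  have hTlast : T jlast = 1 / r := by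
    have : ∑ j : Fin r, T j = r * T jlast := by
      rw [Finset.sum_congr rfl (fun j _ => hTeq j)]
      simp [Finset.sum_const, nsmul_eq_mul]
    rw [this] at hTsum
    field_simp at hTsum ⊢
    linarith
  refine ⟨f, fun i => r * t i, fun k => r * B jlast k, fun i => ?_, fun j => ?_, fun j k => ?_⟩
  · exact mul_nonneg (by positivity) (ht0 i)
  · rw [← Finset.mul_sum]
    have : ∑ i ∈ Finset.univ.filter (fun i => f i = j), t i = T j := rfl
    rw [this, hTeq j, hTlast]
    field_simp
  · have : ∑ i ∈ Finset.univ.filter (fun i => f i = j), (r:ℝ) * t i * q i k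
        = r * B j k := by
      rw [hB, Finset.mul_sum]
      exact Finset.sum_congr rfl (fun i _ => by ring)
    rw [this, hBeq j k]


open Matrix Module

noncomputable def ψ (n : ℕ) : (Fin n → ℂ) ≃ₗ[ℂ] EuclideanSpace ℂ (Fin n) :=
  (WithLp.linearEquiv 2 ℂ (Fin n → ℂ)).symm

lemma inner_psi {n : ℕ} (x y : Fin n → ℂ) :
    (inner ℂ (ψ n x) (ψ n y) : ℂ) = star x ⬝ᵥ y := by
  simp [PiLp.inner_apply, dotProduct, ψ, mul_comm]

lemma exists_orth {n : ℕ} {ι : Type} [Fintype ι] (hM : Fintype.card ι < n)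
    (g : ι → (Fin n → ℂ)) :
    ∃ v : Fin n → ℂ, star v ⬝ᵥ v = 1 ∧
      ∀ w ∈ Submodule.span ℂ (Set.range g), star w ⬝ᵥ v = 0 := by
  classical
  set W : Submodule ℂ (EuclideanSpace ℂ (Fin n)) :=
    Submodule.span ℂ (Set.range (fun a => ψ n (g a))) with hW
  have hWrank : finrank ℂ W ≤ Fintype.card ι := by
    have := finrank_span_le_card (R := ℂ) (Set.range (fun a => ψ n (g a)))
    refine le_trans this ?_
    have := Set.toFinset_range (fun a => ψ n (g a))
    rw [this]
    exact le_trans (Finset.card_image_le) (by simp)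
  have hbot : Wᗮ ≠ ⊥ := by
    intro h
    have h1 := Submodule.finrank_add_finrank_orthogonal W
    rw [h, finrank_bot, finrank_euclideanSpace] at h1
    simp at h1
    omega
  obtain ⟨u, huW, hu0⟩ := Submodule.exists_mem_ne_zero_of_ne_bot hbot
  set v : Fin n → ℂ := (ψ n).symm (((‖u‖ : ℂ))⁻¹ • u) with hv
  have hψv : ψ n v = ((‖u‖ : ℂ))⁻¹ • u := by rw [hv]; simp
  have hmap : Submodule.map (ψ n).toLinearMap (Submodule.span ℂ (Set.range g)) = W := by
    rw [Submodule.map_span, hW, ← Set.range_comp]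
    rfl
  refine ⟨v, ?_, ?_⟩
  · rw [← inner_psi, hψv]
    rw [inner_smul_left, inner_smul_right, inner_self_eq_norm_sq_to_K]
    have h1 : ‖u‖ ≠ 0 := norm_ne_zero_iff.2 hu0
    rw [map_inv₀, Complex.conj_ofReal]
    have : ((‖u‖ : ℂ)) ≠ 0 := by exact_mod_cast h1
    field_simp
    norm_cast
  · intro w hw
    rw [← inner_psi, hψv, inner_smul_right]
    have hψw : ψ n w ∈ W := hmap ▸ Submodule.mem_map_of_mem hw
    rw [Submodule.inner_right_of_mem_orthogonal hψw huW, mul_zero]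

lemma herm_dot {n : ℕ} {M : Matrix (Fin n) (Fin n) ℂ} (hM : M.IsHermitian)
    (x y : Fin n → ℂ) : star x ⬝ᵥ (M *ᵥ y) = star (M *ᵥ x) ⬝ᵥ y := by
  rw [star_mulVec, hM.eq, ← Matrix.dotProduct_mulVec]

lemma star_dot_comm {n : ℕ} (x y : Fin n → ℂ) :
    star x ⬝ᵥ y = star (star y ⬝ᵥ x) := Matrix.star_dotProduct x y

lemma greedy {n d : ℕ} (A : Fin d → Matrix (Fin n) (Fin n) ℂ)
    (hAH : ∀ k, (A k).IsHermitian)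
    (hone : (1 : Matrix (Fin n) (Fin n) ℂ) ∈ Submodule.span ℂ (Set.range A))
    (m : ℕ) (hm : (m - 1) * d < n) :
    ∃ v : Fin m → (Fin n → ℂ),
      (∀ i j, star (v i) ⬝ᵥ v j = if i = j then 1 else 0) ∧
      (∀ (k : Fin d) (i j : Fin m), i ≠ j → star (v i) ⬝ᵥ ((A k) *ᵥ v j) = 0) := by
  induction m with
  | zero => exact ⟨Fin.elim0, fun i => i.elim0, fun _ i => i.elim0⟩
  | succ m ih =>
    have hmm : m * d < n := by simpa using hm
    have hm' : (m - 1) * d < n :=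
      lt_of_le_of_lt (Nat.mul_le_mul_right d (Nat.sub_le m 1)) hmm
    obtain ⟨v, hvo, hvc⟩ := ih hm'
    set g : Fin m × Fin d → (Fin n → ℂ) := fun p => (A p.2) *ᵥ (v p.1) with hg
    have hcard : Fintype.card (Fin m × Fin d) < n := by simpa using hmm
    obtain ⟨vn, hvn1, hvn0⟩ := exists_orth hcard g
    have hmemA : ∀ (k : Fin d) (i : Fin m),
        (A k) *ᵥ (v i) ∈ Submodule.span ℂ (Set.range g) :=
      fun k i => Submodule.subset_span ⟨(i, k), rfl⟩
    have hmemv : ∀ i : Fin m, v i ∈ Submodule.span ℂ (Set.range g) := by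
      intro i
      set L : Matrix (Fin n) (Fin n) ℂ →ₗ[ℂ] (Fin n → ℂ) :=
        { toFun := fun B => B *ᵥ v i
          map_add' := fun B C => Matrix.add_mulVec _ _ _
          map_smul' := fun c B => Matrix.smul_mulVec c B (v i) } with hL
      have h1 : v i = L 1 := by simp [hL]
      rw [h1]
      have h2 : L 1 ∈ Submodule.map L (Submodule.span ℂ (Set.range A)) :=
        Submodule.mem_map_of_mem hone
      rw [Submodule.map_span, ← Set.range_comp] at h2
      refine Submodule.span_mono ?_ h2
      rintro _ ⟨k, rfl⟩
      exact ⟨(i, k), rfl⟩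
    refine ⟨Fin.snoc v vn, ?_, ?_⟩
    · intro i j
      refine Fin.lastCases ?_ ?_ i
      · refine Fin.lastCases ?_ ?_ j
        · simp [Fin.snoc_last, hvn1]
        · intro q
          have hne : Fin.last m ≠ q.castSucc := (Fin.castSucc_lt_last q).ne'
          rw [Fin.snoc_last, Fin.snoc_castSucc, if_neg hne]
          rw [star_dot_comm]
          rw [hvn0 _ (hmemv q)]
          simp
      · intro p
        refine Fin.lastCases ?_ ?_ j
        · have hne : p.castSucc ≠ Fin.last m := (Fin.castSucc_lt_last p).ne
          rw [Fin.snoc_last, Fin.snoc_castSucc, if_neg hne]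
          exact hvn0 _ (hmemv p)
        · intro q
          rw [Fin.snoc_castSucc, Fin.snoc_castSucc, hvo p q]
          by_cases h : p = q
          · subst h; simp
          · rw [if_neg h, if_neg (fun hc => h (Fin.castSucc_injective m hc))]
    · intro k i j hij
      revert hij
      refine Fin.lastCases ?_ ?_ i
      · refine Fin.lastCases ?_ ?_ j
        · intro hij; exact absurd rfl hij
        · intro q hij
          rw [Fin.snoc_last, Fin.snoc_castSucc, star_dot_comm]
          rw [hvn0 _ (hmemA k q)]
          simp
      · intro p
        refine Fin.lastCases ?_ ?_ j
        · intro hij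
          rw [Fin.snoc_last, Fin.snoc_castSucc, herm_dot (hAH k)]
          exact hvn0 _ (hmemA k p)
        · intro q hij
          rw [Fin.snoc_castSucc, Fin.snoc_castSucc]
          exact hvc k p q (fun h => hij (by rw [h]))

lemma real_smul_matrix {n : ℕ} (c : ℝ) (M : Matrix (Fin n) (Fin n) ℂ) :
    c • M = ((c : ℂ)) • M := by
  ext i j
  simp [Complex.real_smul]

lemma sum_mulVec {n : ℕ} {ι : Type*} (s : Finset ι) (M : ι → Matrix (Fin n) (Fin n) ℂ)
    (x : Fin n → ℂ) : (∑ i ∈ s, M i) *ᵥ x = ∑ i ∈ s, M i *ᵥ x := by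
  ext j
  simp only [Matrix.mulVec, dotProduct, Finset.sum_apply, Finset.sum_mul,
    Matrix.sum_apply]
  rw [Finset.sum_comm]

lemma mulVec_sum {n : ℕ} {ι : Type*} (s : Finset ι) (M : Matrix (Fin n) (Fin n) ℂ)
    (x : ι → Fin n → ℂ) : M *ᵥ (∑ i ∈ s, x i) = ∑ i ∈ s, M *ᵥ x i := by
  rw [show (M *ᵥ (∑ i ∈ s, x i)) = M.mulVecLin (∑ i ∈ s, x i) from rfl, map_sum]
  rfl

lemma sum_dot {n : ℕ} {ι : Type*} (s : Finset ι) (x : ι → Fin n → ℂ) (y : Fin n → ℂ) :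
    (∑ i ∈ s, x i) ⬝ᵥ y = ∑ i ∈ s, x i ⬝ᵥ y := by
  simp only [dotProduct, Finset.sum_apply, Finset.sum_mul]
  rw [Finset.sum_comm]

lemma dot_sum {n : ℕ} {ι : Type*} (s : Finset ι) (y : Fin n → ℂ) (x : ι → Fin n → ℂ) :
    y ⬝ᵥ (∑ i ∈ s, x i) = ∑ i ∈ s, y ⬝ᵥ x i := by
  simp only [dotProduct, Finset.sum_apply, Finset.mul_sum]
  rw [Finset.sum_comm]

lemma vmv_mul {n : ℕ} (a b : Fin n → ℂ) (M : Matrix (Fin n) (Fin n) ℂ) :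
    vecMulVec a b * M = vecMulVec a (b ᵥ* M) := by
  ext i j
  simp only [Matrix.mul_apply, vecMulVec_apply, Matrix.vecMul, dotProduct,
    Finset.mul_sum]
  exact Finset.sum_congr rfl (fun k _ => by ring)

lemma vmv_vmv {n : ℕ} (a b c e : Fin n → ℂ) :
    vecMulVec a b * vecMulVec c e = (b ⬝ᵥ c) • vecMulVec a e := by
  ext i j
  simp only [Matrix.mul_apply, vecMulVec_apply, Matrix.smul_apply, dotProduct,
    smul_eq_mul, Finset.sum_mul]
  exact Finset.sum_congr rfl (fun k _ => by ring)

lemma vmv_mulVec {n : ℕ} (a b x : Fin n → ℂ) :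
    vecMulVec a b *ᵥ x = (b ⬝ᵥ x) • a := by
  ext i
  simp only [Matrix.mulVec, vecMulVec_apply, dotProduct, Pi.smul_apply,
    smul_eq_mul, Finset.sum_mul]
  exact Finset.sum_congr rfl (fun k _ => by ring)

lemma vmv_conjT {n : ℕ} (a : Fin n → ℂ) :
    (vecMulVec a (star a))ᴴ = vecMulVec a (star a) := by
  ext i j
  simp only [Matrix.conjTranspose_apply, vecMulVec_apply, Pi.star_apply]
  rw [StarMul.star_mul, star_star]

lemma pair_dot {n m : ℕ} (v : Fin m → Fin n → ℂ) (M : Matrix (Fin n) (Fin n) ℂ)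
    (hcross : ∀ i i', i ≠ i' → star (v i) ⬝ᵥ (M *ᵥ v i') = 0)
    (a : Fin m → ℝ) (S T : Finset (Fin m)) :
    star (∑ i ∈ S, ((a i : ℂ)) • v i) ⬝ᵥ (M *ᵥ (∑ i ∈ T, ((a i : ℂ)) • v i))
      = ∑ i ∈ S ∩ T, ((a i : ℂ))^2 * (star (v i) ⬝ᵥ (M *ᵥ v i)) := by
  classical
  rw [star_sum, sum_dot, _root_.mulVec_sum]
  have hterm : ∀ i ∈ S, (star (((a i : ℂ)) • v i)) ⬝ᵥ (∑ i' ∈ T, M *ᵥ (((a i' : ℂ)) • v i'))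
      = if i ∈ T then ((a i : ℂ))^2 * (star (v i) ⬝ᵥ (M *ᵥ v i)) else 0 := by
    intro i _
    rw [dot_sum]
    have : ∀ i' ∈ T, (star (((a i : ℂ)) • v i)) ⬝ᵥ (M *ᵥ (((a i' : ℂ)) • v i'))
        = if i' = i then ((a i : ℂ))^2 * (star (v i) ⬝ᵥ (M *ᵥ v i)) else 0 := by
      intro i' _
      rw [Matrix.mulVec_smul, star_smul, smul_dotProduct, dotProduct_smul]
      by_cases h : i' = i
      · subst h
        simp only [if_true, smul_eq_mul, Complex.star_def, Complex.conj_ofReal]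
        ring
      · rw [if_neg h, hcross i i' (fun hh => h hh.symm)]
        simp
    rw [Finset.sum_congr rfl this, Finset.sum_ite_eq' T i
      (fun _ => ((a i : ℂ))^2 * (star (v i) ⬝ᵥ (M *ᵥ v i)))]
  rw [Finset.sum_congr rfl hterm, ← Finset.sum_filter, Finset.filter_mem_eq_inter]

set_option maxHeartbeats 2000000 in
/-- Every quantum graph `G` has a code of dimension at least `⌈|G|/(‖G‖+1)²⌉`, where
`|G| = n` is the order and `‖G‖ = dim E(G) − 1` is the valence (so `(‖G‖+1)²` is written
`(dim E(G) − 1 + 1)²` and `⌈a/b⌉ = (a + b − 1)/b`). -/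
theorem exists_code_tverberg {n : ℕ} (hn : 0 < n) (G : QuantumGraph n) :
    ∃ (P : Matrix (Fin n) (Fin n) ℂ) (ε : Matrix (Fin n) (Fin n) ℂ → ℝ),
      IsCodeProj G P ε ∧
      (n + (Module.finrank ℝ G.E - 1 + 1) ^ 2 - 1) / (Module.finrank ℝ G.E - 1 + 1) ^ 2 ≤
        P.rank := by
  classical
  have hone_ne : (1 : Matrix (Fin n) (Fin n) ℂ) ≠ 0 := by
    intro h
    have h2 := congrFun (congrFun h ⟨0, hn⟩) ⟨0, hn⟩
    simp [Matrix.one_apply] at h2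
  haveI : Nontrivial G.E := ⟨⟨⟨1, G.one_mem⟩, 0, by
    intro h
    exact hone_ne (by simpa [Subtype.ext_iff] using h)⟩⟩
  set d := Module.finrank ℝ G.E with hd
  have hdpos : 0 < d := Module.finrank_pos
  set bE : Basis (Fin d) ℝ G.E := Module.finBasis ℝ G.E with hbE
  set A : Fin d → Matrix (Fin n) (Fin n) ℂ :=
    fun k => ((bE k : G.E) : Matrix (Fin n) (Fin n) ℂ) with hA
  have hAH : ∀ k, (A k).IsHermitian := fun k => G.herm _ (bE k).2
  have hrepr : ∀ x : G.E,
      ∑ k, ((bE.repr x k : ℝ) : ℂ) • A k = (x : Matrix (Fin n) (Fin n) ℂ) := by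
    intro x
    have h1 := bE.sum_repr x
    calc ∑ k, ((bE.repr x k : ℝ) : ℂ) • A k
        = ∑ k, ((bE.repr x k • bE k : G.E) : Matrix (Fin n) (Fin n) ℂ) := by
          refine Finset.sum_congr rfl (fun k _ => ?_)
          rw [Submodule.coe_smul, real_smul_matrix]
      _ = ((∑ k, bE.repr x k • bE k : G.E) : Matrix (Fin n) (Fin n) ℂ) := by
          rw [Submodule.coe_sum]
      _ = (x : Matrix (Fin n) (Fin n) ℂ) := by rw [h1]
  have hone_span : (1 : Matrix (Fin n) (Fin n) ℂ) ∈ Submodule.span ℂ (Set.range A) := by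
    have := hrepr ⟨1, G.one_mem⟩
    rw [show (((⟨1, G.one_mem⟩ : G.E) : Matrix (Fin n) (Fin n) ℂ)) = 1 from rfl] at this
    rw [← this]
    exact Submodule.sum_mem _
      (fun k _ => Submodule.smul_mem _ _ (Submodule.subset_span ⟨k, rfl⟩))
  -- arithmetic setup
  rw [show d - 1 + 1 = d from Nat.succ_pred_eq_of_pos hdpos]
  have hD2 : 0 < d ^ 2 := pow_pos hdpos 2
  have hdd : d * d = d ^ 2 := (pow_two d).symm
  generalize hDD : d ^ 2 = D at hD2 ⊢
  set r := (n + D - 1) / D with hrdef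
  have hr1 : 1 ≤ r := by
    rw [hrdef, Nat.le_div_iff_mul_le hD2]
    omega
  have hrd : (r - 1) * D < n := by
    have h1 : r * D ≤ n + D - 1 := by rw [hrdef]; exact Nat.div_mul_le_self _ _
    have h2 : (r - 1) * D = r * D - D := by rw [Nat.sub_mul, one_mul]
    rw [h2]
    generalize r * D = RD at h1 ⊢
    omega
  -- greedy orthonormal vectors
  have hmd : (d * (r - 1) + 1 - 1) * d < n := by
    have h3 : (d * (r - 1) + 1 - 1) * d = (r - 1) * (d * d) := by
      simp only [Nat.add_sub_cancel]
      ring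
    rw [h3, hdd, hDD]
    exact hrd
  obtain ⟨v, hvo, hvc⟩ := greedy A hAH hone_span (d * (r - 1) + 1) hmd
  set q : Fin (d * (r - 1) + 1) → Fin d → ℝ :=
    fun i k => (star (v i) ⬝ᵥ (A k *ᵥ v i)).re with hq
  have hqc : ∀ i k, star (v i) ⬝ᵥ (A k *ᵥ v i) = ((q i k : ℝ) : ℂ) := by
    intro i k
    have h1 : star (v i) ⬝ᵥ (A k *ᵥ v i) = star (star (v i) ⬝ᵥ (A k *ᵥ v i)) := by
      conv_lhs => rw [herm_dot (hAH k), star_dot_comm]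
    have h2 := Complex.conj_eq_iff_re.1 (by rw [← Complex.star_def]; exact h1.symm)
    exact h2.symm
  -- the lifting functional
  set c : Fin d → ℝ := fun k => bE.repr ⟨1, G.one_mem⟩ k with hc
  set ℓ : (Fin d → ℝ) →ₗ[ℝ] ℝ := ∑ k, c k • LinearMap.proj k with hℓ
  have hℓapp : ∀ y : Fin d → ℝ, ℓ y = ∑ k, c k * y k := by
    intro y
    rw [hℓ]
    simp [LinearMap.sum_apply, LinearMap.proj_apply, smul_eq_mul]
  have hsumA1 : ∑ k, ((c k : ℝ) : ℂ) • A k = 1 := hrepr ⟨1, G.one_mem⟩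
  have hql : ∀ i, ℓ (q i) = 1 := by
    intro i
    rw [hℓapp]
    have hcast : ((∑ k, c k * q i k : ℝ) : ℂ) = 1 := by
      push_cast
      have hstep : ∀ k ∈ Finset.univ, ((c k : ℂ)) * ((q i k : ℂ))
          = star (v i) ⬝ᵥ (((((c k : ℝ) : ℂ)) • A k) *ᵥ v i) := by
        intro k _
        rw [Matrix.smul_mulVec, dotProduct_smul, hqc i k]
        simp
      rw [Finset.sum_congr rfl hstep, ← dot_sum, ← _root_.sum_mulVec, hsumA1,
        Matrix.one_mulVec]
      have := hvo i i
      rwa [if_pos rfl] at this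
    exact_mod_cast hcast
  -- Tverberg partition
  obtain ⟨f, w, b, hw0, hwsum, hwq⟩ := tverberg_lifted hr1 ℓ q hql
  set Wv : Fin r → (Fin n → ℂ) :=
    fun j => ∑ i ∈ Finset.univ.filter (fun i => f i = j),
      ((Real.sqrt (w i) : ℂ)) • v i with hWv
  have hdisj : ∀ j l : Fin r, j ≠ l →
      (Finset.univ.filter (fun i => f i = j)) ∩ (Finset.univ.filter (fun i => f i = l))
        = ∅ := by
    intro j l hjl
    ext i
    simp only [Finset.mem_inter, Finset.mem_filter, Finset.mem_univ, true_and,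
      Finset.notMem_empty, iff_false, not_and]
    intro h1 h2
    exact hjl (h1 ▸ h2 ▸ rfl)
  have hsq : ∀ i, ((Real.sqrt (w i) : ℂ)) ^ 2 = ((w i : ℝ) : ℂ) := by
    intro i
    rw [← Complex.ofReal_pow, Real.sq_sqrt (hw0 i)]
  have hdot : ∀ (M : Matrix (Fin n) (Fin n) ℂ) (μ : Fin (d * (r - 1) + 1) → ℂ),
      (∀ i i', i ≠ i' → star (v i) ⬝ᵥ (M *ᵥ v i') = 0) →
      (∀ i, star (v i) ⬝ᵥ (M *ᵥ v i) = μ i) →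
      ∀ j l, star (Wv j) ⬝ᵥ (M *ᵥ Wv l)
        = if j = l then
            ∑ i ∈ Finset.univ.filter (fun i => f i = j), ((w i : ℝ) : ℂ) * μ i
          else 0 := by
    intro M μ hcross hdiag j l
    rw [hWv]
    rw [pair_dot v M hcross (fun i => Real.sqrt (w i)) _ _]
    by_cases h : j = l
    · subst h
      rw [if_pos rfl, Finset.inter_self]
      refine Finset.sum_congr rfl (fun i _ => ?_)
      rw [hsq i, hdiag i]
    · rw [if_neg h, hdisj j l h, Finset.sum_empty]
  have hWW : ∀ j l, star (Wv j) ⬝ᵥ Wv l = if j = l then 1 else 0 := by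
    intro j l
    have h1 : star (Wv j) ⬝ᵥ Wv l
        = star (Wv j) ⬝ᵥ ((1 : Matrix (Fin n) (Fin n) ℂ) *ᵥ Wv l) := by
      rw [Matrix.one_mulVec]
    rw [h1, hdot 1 (fun _ => 1)
      (fun i i' hii => by
        rw [Matrix.one_mulVec]
        have := hvo i i'
        rwa [if_neg hii] at this)
      (fun i => by
        rw [Matrix.one_mulVec]
        have := hvo i i
        rwa [if_pos rfl] at this) j l]
    by_cases h : j = l
    · subst h
      rw [if_pos rfl, if_pos rfl]
      have h3 : ∀ i ∈ Finset.univ.filter (fun i => f i = j),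
          ((w i : ℝ) : ℂ) * 1 = ((w i : ℝ) : ℂ) := fun i _ => mul_one _
      rw [Finset.sum_congr rfl h3]
      have h4 : (∑ i ∈ Finset.univ.filter (fun i => f i = j), ((w i : ℝ) : ℂ))
          = (((∑ i ∈ Finset.univ.filter (fun i => f i = j), w i : ℝ)) : ℂ) := by
        push_cast
        rfl
      rw [h4, hwsum j]
      simp
    · rw [if_neg h, if_neg h]
  have hWA : ∀ k j l, star (Wv j) ⬝ᵥ (A k *ᵥ Wv l)
      = if j = l then ((b k : ℝ) : ℂ) else 0 := by
    intro k j l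
    rw [hdot (A k) (fun i => ((q i k : ℝ) : ℂ)) (hvc k) (fun i => hqc i k) j l]
    by_cases h : j = l
    · subst h
      rw [if_pos rfl, if_pos rfl]
      have h4 : (∑ i ∈ Finset.univ.filter (fun i => f i = j),
            ((w i : ℝ) : ℂ) * ((q i k : ℝ) : ℂ))
          = (((∑ i ∈ Finset.univ.filter (fun i => f i = j), w i * q i k : ℝ)) : ℂ) := by
        push_cast
        rfl
      rw [h4, hwq j k]
    · rw [if_neg h, if_neg h]
  set P : Matrix (Fin n) (Fin n) ℂ := ∑ j, vecMulVec (Wv j) (star (Wv j)) with hP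
  set ε : Matrix (Fin n) (Fin n) ℂ → ℝ :=
    fun B => if h : B ∈ G.E then ∑ k, bE.repr ⟨B, h⟩ k * b k else 0 with hε
  have hWB : ∀ (B) (hB : B ∈ G.E) (j l : Fin r),
      star (Wv j) ⬝ᵥ (B *ᵥ Wv l) = if j = l then ((ε B : ℝ) : ℂ) else 0 := by
    intro B hB j l
    have hBdec : B = ∑ k, ((bE.repr ⟨B, hB⟩ k : ℝ) : ℂ) • A k := (hrepr ⟨B, hB⟩).symm
    conv_lhs => rw [hBdec]
    rw [_root_.sum_mulVec, dot_sum]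
    have hstep : ∀ k ∈ Finset.univ,
        star (Wv j) ⬝ᵥ (((((bE.repr ⟨B, hB⟩ k : ℝ) : ℂ)) • A k) *ᵥ Wv l)
        = ((bE.repr ⟨B, hB⟩ k : ℝ) : ℂ) * (if j = l then ((b k : ℝ) : ℂ) else 0) := by
      intro k _
      rw [Matrix.smul_mulVec, dotProduct_smul, smul_eq_mul, hWA k j l]
    rw [Finset.sum_congr rfl hstep]
    by_cases h : j = l
    · subst h
      simp only [if_pos rfl]
      rw [hε]
      simp only [dif_pos hB]
      push_cast
      rfl
    · simp only [if_neg h, mul_zero, Finset.sum_const_zero]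
  have hPherm : P.IsHermitian := by
    show Pᴴ = P
    rw [hP, Matrix.conjTranspose_sum]
    exact Finset.sum_congr rfl (fun j _ => vmv_conjT (Wv j))
  have hPP : P * P = P := by
    rw [hP, Finset.sum_mul]
    refine Finset.sum_congr rfl (fun j _ => ?_)
    rw [Finset.mul_sum]
    have hstep : ∀ l ∈ Finset.univ,
        vecMulVec (Wv j) (star (Wv j)) * vecMulVec (Wv l) (star (Wv l))
        = if j = l then vecMulVec (Wv j) (star (Wv l)) else 0 := by
      intro l _
      rw [vmv_vmv, hWW j l]
      by_cases h : j = l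
      · subst h; rw [if_pos rfl, if_pos rfl, one_smul]
      · rw [if_neg h, if_neg h, zero_smul]
    rw [Finset.sum_congr rfl hstep, Finset.sum_ite_eq Finset.univ j]
    simp
  have hPAP : ∀ B ∈ G.E, P * B * P = ((ε B : ℝ) : ℂ) • P := by
    intro B hB
    rw [hP, Finset.sum_mul, Finset.sum_mul, Finset.smul_sum]
    refine Finset.sum_congr rfl (fun j _ => ?_)
    rw [Finset.mul_sum]
    have hstep : ∀ l ∈ Finset.univ,
        vecMulVec (Wv j) (star (Wv j)) * B * vecMulVec (Wv l) (star (Wv l))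
        = if j = l then ((ε B : ℝ) : ℂ) • vecMulVec (Wv j) (star (Wv l)) else 0 := by
      intro l _
      rw [vmv_mul, vmv_vmv, ← Matrix.dotProduct_mulVec, hWB B hB j l]
      by_cases h : j = l
      · subst h; rw [if_pos rfl, if_pos rfl]
      · rw [if_neg h, if_neg h, zero_smul]
    rw [Finset.sum_congr rfl hstep, Finset.sum_ite_eq Finset.univ j]
    simp
  have hPvec : ∀ l, P *ᵥ Wv l = Wv l := by
    intro l
    rw [hP, _root_.sum_mulVec]
    have hstep : ∀ j ∈ Finset.univ,
        vecMulVec (Wv j) (star (Wv j)) *ᵥ Wv l = if j = l then Wv l else 0 := by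
      intro j _
      rw [vmv_mulVec, hWW j l]
      by_cases h : j = l
      · subst h; rw [if_pos rfl, if_pos rfl, one_smul]
      · rw [if_neg h, if_neg h, zero_smul]
    rw [Finset.sum_congr rfl hstep, Finset.sum_ite_eq' Finset.univ l]
    simp
  have hWli : LinearIndependent ℂ Wv := by
    have ho : Orthonormal ℂ (fun j => ψ n (Wv j)) := by
      rw [orthonormal_iff_ite]
      intro j l
      rw [inner_psi]
      exact hWW j l
    have hli := ho.linearIndependent
    have heq : Wv = (ψ n).symm.toLinearMap ∘ (fun j => ψ n (Wv j)) := by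
      funext j; simp
    rw [heq]
    exact hli.map' (ψ n).symm.toLinearMap (LinearEquiv.ker _)
  have hrank : r ≤ P.rank := by
    have h1 : Submodule.span ℂ (Set.range Wv) ≤ LinearMap.range P.mulVecLin := by
      rw [Submodule.span_le]
      rintro _ ⟨j, rfl⟩
      exact ⟨Wv j, by rw [Matrix.mulVecLin_apply]; exact hPvec j⟩
    have h2 := Submodule.finrank_mono h1
    rw [finrank_span_eq_card hWli] at h2
    simpa [Matrix.rank] using h2
  exact ⟨P, ε, ⟨hPherm, hPP, hPAP⟩, hrank⟩
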